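/- Let k be an algebraically closed field. For every triple (x, y, z) ∈ k³ there exist matrices A, B ∈ SL_2(k) with t_A = x, t_B = y and t_{AB} = z. -/

import Mathlib

/-- The trace of an element of `SL₂(k)`, viewed as a matrix. -/
def trSL {k : Type*} [CommRing k] (M : Matrix.SpecialLinearGroup (Fin 2) k) : k :=
  Matrix.trace (M : Matrix (Fin 2) (Fin 2) k)

/-- Over an algebraically closed field, every triple `(x, y, z)` is realized as
`(t_A, t_B, t_{AB})` for some `A, B ∈ SL₂(k)`. -/
theorem surjective_trace_triple {k : Type*} [Field k] [IsAlgClosed k] (x y z : k) :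
    ∃ A B : Matrix.SpecialLinearGroup (Fin 2) k,
      trSL A = x ∧ trSL B = y ∧ trSL (A * B) = z := by
  -- find b with b^2 - z*b + 1 = 0
  obtain ⟨b, hb⟩ := IsAlgClosed.exists_root
    (Polynomial.X ^ 2 - Polynomial.C z * Polynomial.X + Polynomial.C 1)
    (by
      have h2 : (Polynomial.X ^ 2 - Polynomial.C z * Polynomial.X +
          Polynomial.C 1 : Polynomial k).degree = 2 := by compute_degree!
      rw [h2]; decide)
  have hb' : b ^ 2 - z * b + 1 = 0 := by
    simpa [Polynomial.IsRoot] using hb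
  have hbne : b ≠ 0 := by
    rintro rfl
    simp at hb'
  refine ⟨⟨!![x, -1; 1, 0], by simp [Matrix.det_fin_two_of]⟩,
    ⟨!![0, b; -b⁻¹, y], by simp [Matrix.det_fin_two_of, hbne]⟩, ?_, ?_, ?_⟩
  · simp [trSL, Matrix.trace_fin_two_of]
  · simp [trSL, Matrix.trace_fin_two_of]
  · show Matrix.trace ((!![x, -1; 1, 0] : Matrix (Fin 2) (Fin 2) k) * !![0, b; -b⁻¹, y]) = z
    have : (!![x, -1; 1, 0] : Matrix (Fin 2) (Fin 2) k) * !![0, b; -b⁻¹, y] =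
        !![b⁻¹, x * b - y; 0, b] := by
      rw [Matrix.mul_fin_two]
      ring_nf
    rw [this, Matrix.trace_fin_two_of]
    field_simp
    linear_combination hb'
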